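/- Let q be a real number with q > 0 and q ≠ 1, let r ≥ 1 and n ≥ 0 be integers, and let S(n,0), S(n,1), …, S(n,n) be real numbers such that [x]^n = Σ_{k=0}^{n} q^{k(k−1)/2} · S(n,k) · [x]_k for every real x (this identity determines the S(n,k) uniquely; they are the Carlitz q-Stirling numbers of the second kind). Then β_n^{(r)} = Σ_{k=0}^{n} φ_r(q,k) · S(n,k), where φ_r(q,k) := (−1)^k · [k]! · Σ_{i=0}^{r−1} q^{i·k} · [r−1]_i / [k+r]_{i+1}. -/

import Mathlib

open Finset

/-- The q-bracket: `[x] = (q^x - 1)/(q - 1)`. -/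
noncomputable def qb (q x : ℝ) : ℝ := (q ^ x - 1) / (q - 1)

/-- The q-falling factorial `[x]_m = [x]·[x-1]⋯[x-m+1]`. -/
noncomputable def qff (q x : ℝ) (m : ℕ) : ℝ := ∏ j ∈ range m, qb q (x - j)

/-- The q-factorial `[m]! = [m]_m`. -/
noncomputable def qfact (q : ℝ) (m : ℕ) : ℝ := qff q (m : ℝ) m

section Aux
variable {q : ℝ} (hq : 0 < q) (hq1 : q ≠ 1)

lemma qb_natCast (m : ℕ) : qb q (m : ℝ) = (q ^ m - 1) / (q - 1) := by
  rw [qb, Real.rpow_natCast]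

lemma qpow_ne_one (hq : 0 < q) (hq1 : q ≠ 1) {m : ℕ} (hm : m ≠ 0) : q ^ m ≠ 1 := by
  rcases lt_trichotomy q 1 with h | h | h
  · exact ne_of_lt (pow_lt_one₀ hq.le h hm)
  · exact absurd h hq1
  · exact ne_of_gt (one_lt_pow₀ h hm)

lemma qb_nat_ne_zero (hq : 0 < q) (hq1 : q ≠ 1) {m : ℕ} (hm : m ≠ 0) :
    qb q (m : ℝ) ≠ 0 := by
  rw [qb_natCast]
  exact div_ne_zero (sub_ne_zero.2 (qpow_ne_one hq hq1 hm)) (sub_ne_zero.2 hq1)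

lemma qff_succ (x : ℝ) (m : ℕ) : qff q x (m + 1) = qff q x m * qb q (x - m) := by
  rw [qff, prod_range_succ]; rfl

lemma qff_succ' (x : ℝ) (m : ℕ) : qff q x (m + 1) = qb q x * qff q (x - 1) m := by
  rw [qff, prod_range_succ']
  rw [mul_comm]
  congr 1
  · norm_num
  · apply prod_congr rfl
    intro j _
    congr 1
    push_cast; ring

lemma qff_zero (x : ℝ) : qff q x 0 = 1 := rfl
lemma qff_one (x : ℝ) : qff q x 1 = qb q x := by
  rw [qff, prod_range_one]; norm_num

/-- The A-sum. -/
noncomputable def Ak (q : ℝ) (k r : ℕ) : ℝ :=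
  ∑ i ∈ range r, q ^ (i * k) * qff q ((r : ℝ) - 1) i / qff q ((k : ℝ) + r) (i + 1)

lemma Ak_zero (k : ℕ) : Ak q k 0 = 0 := by simp [Ak]

lemma Ak_succ (k r : ℕ) :
    Ak q k (r + 1) = (q ^ k * qb q (r : ℝ) / qb q ((k : ℝ) + r + 1)) * Ak q k r
      + 1 / qb q ((k : ℝ) + r + 1) := by
  rw [Ak, sum_range_succ']
  have h1 : ∀ i : ℕ, qff q (((r : ℕ) + 1 : ℕ) - 1 : ℝ) (i + 1)
      = qb q (r : ℝ) * qff q ((r : ℝ) - 1) i := by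
    intro i
    have : (((r : ℕ) + 1 : ℕ) : ℝ) - 1 = (r : ℝ) := by push_cast; ring
    rw [this, qff_succ']
  have h2 : ∀ i : ℕ, qff q ((k : ℝ) + ((r : ℕ) + 1 : ℕ)) (i + 1 + 1)
      = qb q ((k : ℝ) + r + 1) * qff q ((k : ℝ) + r) (i + 1) := by
    intro i
    have e : ((k : ℝ) + ((r : ℕ) + 1 : ℕ)) = (k : ℝ) + r + 1 := by push_cast; ring
    rw [e, qff_succ']
    congr 2
    ring
  have h0 : q ^ (0 * k) * qff q (((r : ℕ) + 1 : ℕ) - 1 : ℝ) 0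
      / qff q ((k : ℝ) + ((r : ℕ) + 1 : ℕ)) (0 + 1) = 1 / qb q ((k : ℝ) + r + 1) := by
    rw [qff_zero]
    have e : ((k : ℝ) + ((r : ℕ) + 1 : ℕ)) = (k : ℝ) + r + 1 := by push_cast; ring
    rw [e, qff_one]
    norm_num
  rw [h0]
  congr 1
  rw [Ak, mul_sum]
  apply sum_congr rfl
  intro i _
  rw [h1, h2]
  ring

lemma nat_cast_sum (k r : ℕ) : (k : ℝ) + r + 1 = ((k + r + 1 : ℕ) : ℝ) := by push_cast; ring

lemma Ak_succ' (k r : ℕ) :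
    Ak q k (r + 1) = (q ^ k * qb q (r : ℝ) / qb q ((k + r + 1 : ℕ) : ℝ)) * Ak q k r
      + 1 / qb q ((k + r + 1 : ℕ) : ℝ) := by
  rw [Ak_succ, nat_cast_sum]

lemma Ak_zero_left (hq : 0 < q) (hq1 : q ≠ 1) (r : ℕ) :
    Ak q 0 r = (r : ℝ) / qb q (r : ℝ) := by
  induction r with
  | zero => simp [Ak_zero, qb, Real.rpow_zero]
  | succ r ih =>
    rw [Ak_succ', ih]
    have e2 : (0 + r + 1 : ℕ) = (r + 1 : ℕ) := by omega
    rw [e2]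
    have hr1 : qb q ((r + 1 : ℕ) : ℝ) ≠ 0 := qb_nat_ne_zero hq hq1 (by omega)
    rcases Nat.eq_zero_or_pos r with h | h
    · subst h
      norm_num [qb, Real.rpow_zero]
    · have hr0 : qb q (r : ℝ) ≠ 0 := qb_nat_ne_zero hq hq1 h.ne'
      rw [pow_zero, one_mul, div_mul_div_comm, mul_comm (qb q (r : ℝ)) ((r : ℕ) : ℝ),
        mul_comm (qb q ((r + 1 : ℕ) : ℝ)) (qb q (r : ℝ)), ← div_div,
        mul_div_assoc, div_self hr0, mul_one]
      rw [← add_div]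
      push_cast
      ring_nf

lemma Ak_mixed (hq : 0 < q) (hq1 : q ≠ 1) (k r : ℕ) (hr : 1 ≤ r) :
    q ^ k * Ak q k r - Ak q k (r + 1) = (q ^ (k + 1) - 1) * Ak q (k + 1) r := by
  have hq0 : q - 1 ≠ 0 := sub_ne_zero.2 hq1
  induction r with
  | zero => omega
  | succ r ih =>
    have hb0 : qb q ((0 : ℕ) : ℝ) = 0 := by norm_num [qb, Real.rpow_zero]
    have hb1 : qb q ((1 : ℕ) : ℝ) = 1 := by
      rw [show ((1 : ℕ) : ℝ) = (1 : ℝ) by norm_num, qb, Real.rpow_one]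
      exact div_self hq0
    have hk1 : q ^ (k + 1) - 1 ≠ 0 := sub_ne_zero.2 (qpow_ne_one hq hq1 (by omega))
    rcases Nat.eq_zero_or_pos r with h | h
    · -- base case r = 1 (r_old = 0)
      subst h
      simp only [Ak_succ', Ak_zero, hb0, hb1]
      have h1 : q ^ (k + 0 + 1) - 1 ≠ 0 := sub_ne_zero.2 (qpow_ne_one hq hq1 (by omega))
      have h2 : q ^ (k + 1 + 1) - 1 ≠ 0 := sub_ne_zero.2 (qpow_ne_one hq hq1 (by omega))
      simp only [qb_natCast]
      field_simp [h1, h2, hq0]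
      ring
    · have ihr := ih h
      set a := Ak q k r with ha
      set b := Ak q k (r + 1) with hb
      set c := Ak q (k + 1) r with hc
      have rel1 : b = (q ^ k * qb q (r : ℝ) / qb q ((k + r + 1 : ℕ) : ℝ)) * a
          + 1 / qb q ((k + r + 1 : ℕ) : ℝ) := Ak_succ' k r
      rw [Ak_succ' k (r + 1), Ak_succ' (k + 1) r, ← hc, ← hb]
      have hcval : c = (q ^ k * a - b) / (q ^ (k + 1) - 1) := by
        field_simp [ihr]
        linarith [ihr]
      rw [hcval, rel1]
      have hN1 : q ^ (k + r + 1) - 1 ≠ 0 := sub_ne_zero.2 (qpow_ne_one hq hq1 (by omega))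
      have hN2 : q ^ (k + (r + 1) + 1) - 1 ≠ 0 := sub_ne_zero.2 (qpow_ne_one hq hq1 (by omega))
      have hN3 : q ^ (k + 1 + r + 1) - 1 ≠ 0 := sub_ne_zero.2 (qpow_ne_one hq hq1 (by omega))
      have hNr : qb q ((r : ℕ) : ℝ) = (q ^ r - 1) / (q - 1) := qb_natCast r
      have hNr1 : qb q (((r : ℕ) + 1 : ℕ) : ℝ) = (q ^ (r + 1) - 1) / (q - 1) := qb_natCast (r + 1)
      simp only [qb_natCast]
      field_simp [hN1, hN2, hN3, hk1, hq0]
      ring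

end Aux

section PhiSec
open Polynomial
variable {q : ℝ}

/-- the moment functional values -/
noncomputable def fR (q : ℝ) (r m : ℕ) : ℝ := ((m : ℝ) + r) / qb q ((m : ℝ) + r)

/-- the linear functional -/
noncomputable def Phi (q : ℝ) (r : ℕ) (p : ℝ[X]) : ℝ := p.sum fun m a => a * fR q r m

lemma fR_succ (r m : ℕ) : fR q r (m + 1) = fR q (r + 1) m := by
  unfold fR
  have e : ((m + 1 : ℕ) : ℝ) + r = (m : ℝ) + ((r + 1 : ℕ) : ℝ) := by push_cast; ring
  rw [e]

lemma Phi_zero (r : ℕ) : Phi q r 0 = 0 := Polynomial.sum_zero_index _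

lemma Phi_add (r : ℕ) (p p' : ℝ[X]) : Phi q r (p + p') = Phi q r p + Phi q r p' :=
  Polynomial.sum_add_index p p' (fun m a => a * fR q r m) (fun _ => zero_mul _)
    (fun _ _ _ => add_mul _ _ _)

lemma Phi_Cmul (r : ℕ) (c : ℝ) (p : ℝ[X]) : Phi q r (C c * p) = c * Phi q r p := by
  rw [← smul_eq_C_mul, Phi,
    Polynomial.sum_smul_index p c (fun m a => a * fR q r m) (fun _ => zero_mul _)]
  rw [Phi, Polynomial.sum_def, Polynomial.sum_def, Finset.mul_sum]
  exact Finset.sum_congr rfl fun m _ => by ring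

lemma Phi_eq_range (r d : ℕ) (p : ℝ[X]) (hd : p.natDegree < d) :
    Phi q r p = ∑ m ∈ range d, p.coeff m * fR q r m :=
  Polynomial.sum_over_range' p (f := fun m a => a * fR q r m) (fun _ => zero_mul _) d hd

lemma Phi_X_mul (r : ℕ) (p : ℝ[X]) : Phi q r (X * p) = Phi q (r + 1) p := by
  have hdeg : (X * p).natDegree < p.natDegree + 2 := by
    calc (X * p).natDegree ≤ X.natDegree + p.natDegree := Polynomial.natDegree_mul_le
    _ ≤ 1 + p.natDegree := by gcongr; exact Polynomial.natDegree_X_le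
    _ < p.natDegree + 2 := by omega
  rw [Phi_eq_range r (p.natDegree + 2) _ hdeg,
    Phi_eq_range (r + 1) (p.natDegree + 1) p (by omega), Finset.sum_range_succ']
  simp only [Polynomial.coeff_X_mul, Polynomial.mul_coeff_zero, Polynomial.coeff_X_zero,
    zero_mul]
  rw [add_zero]
  exact Finset.sum_congr rfl fun m _ => by rw [fR_succ]

lemma Phi_one (r : ℕ) : Phi q r 1 = fR q r 0 := by
  rw [show (1 : ℝ[X]) = C 1 from (map_one C).symm, Phi,
    Polynomial.sum_C_index (f := fun m a => a * fR q r m) (by simp)]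
  exact one_mul _

lemma Phi_monomial (r m : ℕ) (c : ℝ) : Phi q r (C c * X ^ m) = c * fR q r m := by
  rw [Polynomial.C_mul_X_pow_eq_monomial, Phi,
    Polynomial.sum_monomial_index (f := fun m a => a * fR q r m) c (by simp)]

lemma Phi_finsum {ι : Type} (r : ℕ) (s : Finset ι) (g : ι → ℝ[X]) :
    Phi q r (∑ i ∈ s, g i) = ∑ i ∈ s, Phi q r (g i) := by
  classical
  induction s using Finset.induction_on with
  | empty => simp [Phi_zero]
  | insert a s h ih => rw [Finset.sum_insert h, Finset.sum_insert h, Phi_add, ih]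

/-- The polynomial whose value at `q^x` is `[x]_k`. -/
noncomputable def Pq (q : ℝ) (k : ℕ) : ℝ[X] :=
  ∏ j ∈ range k, (C ((q - 1)⁻¹) * (C ((q⁻¹) ^ j) * X - 1))

lemma tri_succ (k : ℕ) : (k + 1) * ((k + 1) - 1) / 2 = k * (k - 1) / 2 + k := by
  calc (k + 1) * ((k + 1) - 1) / 2 = (k + 1).choose 2 := (Nat.choose_two_right _).symm
    _ = k.choose 1 + k.choose 2 := Nat.choose_succ_succ k 1
    _ = k * (k - 1) / 2 + k := by
        rw [Nat.choose_one_right, Nat.choose_two_right]; omega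

lemma qfact_succ (k : ℕ) : qfact q (k + 1) = qb q ((k + 1 : ℕ) : ℝ) * qfact q k := by
  rw [qfact, qff_succ']
  have e : ((k + 1 : ℕ) : ℝ) - 1 = ((k : ℕ) : ℝ) := by push_cast; ring
  rw [e, qfact]

lemma Pq_succ (k : ℕ) :
    Pq q (k + 1) = C ((q - 1)⁻¹ * (q⁻¹) ^ k) * (X * Pq q k) + C (-(q - 1)⁻¹) * Pq q k := by
  rw [Pq, prod_range_succ, ← Pq]
  simp only [map_mul, map_neg, map_pow]
  ring

lemma Phi_Pq (hq : 0 < q) (hq1 : q ≠ 1) (k : ℕ) :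
    ∀ r : ℕ, 1 ≤ r →
      Phi q r (Pq q k) = (-1 : ℝ) ^ k * (q ^ (k * (k - 1) / 2))⁻¹ * qfact q k * Ak q k r := by
  have hq0 : q - 1 ≠ 0 := sub_ne_zero.2 hq1
  have hqne : q ≠ 0 := hq.ne'
  induction k with
  | zero =>
    intro r hr
    rw [Pq, prod_range_zero, Phi_one]
    rw [fR]
    have e : (0 : ℝ) + (r : ℝ) = ((r : ℕ) : ℝ) := by ring
    simp only [Nat.cast_zero, e]
    rw [Ak_zero_left hq hq1]
    simp [qfact, qff_zero]
  | succ k ih =>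
    intro r hr
    rw [Pq_succ, Phi_add, Phi_Cmul, Phi_Cmul, Phi_X_mul]
    rw [ih (r + 1) (by omega), ih r hr]
    have hmix := Ak_mixed hq hq1 k r hr
    have hk1 : q ^ (k + 1) - 1 ≠ 0 := sub_ne_zero.2 (qpow_ne_one hq hq1 (by omega))
    have hAk1 : Ak q (k + 1) r = (q ^ k * Ak q k r - Ak q k (r + 1)) / (q ^ (k + 1) - 1) := by
      field_simp [hmix]
      linarith [hmix]
    rw [tri_succ, qfact_succ, hAk1, qb_natCast]
    have hT : q ^ (k * (k - 1) / 2) ≠ 0 := pow_ne_zero _ hqne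
    have hK : q ^ k ≠ 0 := pow_ne_zero _ hqne
    rw [inv_pow]
    field_simp
    ring

lemma Pq_eval (hq : 0 < q) (x : ℝ) (k : ℕ) : (Pq q k).eval (q ^ x) = qff q x k := by
  rw [Pq, Polynomial.eval_prod, qff]
  apply prod_congr rfl
  intro j _
  simp only [Polynomial.eval_mul, Polynomial.eval_sub, Polynomial.eval_one, Polynomial.eval_C,
    Polynomial.eval_X]
  rw [qb, Real.rpow_sub hq, Real.rpow_natCast, inv_pow, div_eq_mul_inv, div_eq_mul_inv]
  ring

end PhiSec


open Polynomial

theorem extended_beta_in_terms_of_q_stirling (q : ℝ) (hq : 0 < q) (hq1 : q ≠ 1)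
    (r n : ℕ) (hr : 1 ≤ r) (S : ℕ → ℝ)
    (hS : ∀ x : ℝ,
      (qb q x) ^ n = ∑ k ∈ range (n + 1), q ^ (k * (k - 1) / 2) * S k * qff q x k) :
    ((q - 1) ^ n)⁻¹ *
        ∑ k ∈ range (n + 1),
          (-1 : ℝ) ^ (n - k) * (n.choose k : ℝ) * (((k : ℝ) + r) / qb q ((k : ℝ) + r))
      = ∑ k ∈ range (n + 1),
          ((-1 : ℝ) ^ k * qfact q k *
            ∑ i ∈ range r,
              q ^ (i * k) * qff q ((r : ℝ) - 1) i / qff q ((k : ℝ) + r) (i + 1)) * S k := by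
  have hq0 : q - 1 ≠ 0 := sub_ne_zero.2 hq1
  set F : ℝ[X] := C (((q - 1) ^ n)⁻¹) * (X - 1) ^ n with hF
  set G : ℝ[X] := ∑ k ∈ range (n + 1), C (q ^ (k * (k - 1) / 2) * S k) * Pq q k with hG
  -- Step 1 : F = G
  have hroot : ∀ t : ℝ, 0 < t → F.eval t = G.eval t := by
    intro t ht
    have hx := hS (Real.logb q t)
    have hFe : F.eval t = ((t - 1) / (q - 1)) ^ n := by
      simp only [hF, eval_mul, eval_C, eval_pow, eval_sub, eval_X, eval_one]
      rw [div_pow, div_eq_mul_inv, mul_comm]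
    have hGe : G.eval t = ∑ k ∈ range (n + 1), q ^ (k * (k - 1) / 2) * S k
        * qff q (Real.logb q t) k := by
      simp only [hG, eval_finset_sum, eval_mul, eval_C]
      apply sum_congr rfl
      intro k _
      rw [show t = q ^ Real.logb q t from (Real.rpow_logb hq hq1 ht).symm, Pq_eval hq]
      rw [Real.rpow_logb hq hq1 ht]
    rw [hFe, hGe, ← hx]
    rw [show qb q (Real.logb q t) = (t - 1) / (q - 1) by
      rw [qb, Real.rpow_logb hq hq1 ht]]
  have hFG : F = G := by
    have hsub : (Set.Ioi (0 : ℝ)) ⊆ {x | (F - G).IsRoot x} := by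
      intro t ht
      simp only [Set.mem_setOf_eq, IsRoot, eval_sub, sub_eq_zero]
      exact hroot t ht
    have := Polynomial.eq_zero_of_infinite_isRoot (F - G) ((Set.Ioi_infinite 0).mono hsub)
    exact sub_eq_zero.mp this
  -- Step 2 : apply Phi
  have hPhiF : Phi q r F = ((q - 1) ^ n)⁻¹ *
      ∑ k ∈ range (n + 1),
        (-1 : ℝ) ^ (n - k) * (n.choose k : ℝ) * (((k : ℝ) + r) / qb q ((k : ℝ) + r)) := by
    have hexp : F = ∑ m ∈ range (n + 1),
        C (((q - 1) ^ n)⁻¹ * ((-1 : ℝ) ^ (n - m) * (n.choose m : ℝ))) * X ^ m := by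
      rw [hF, show (X - 1 : ℝ[X]) = X + (-1) by ring, add_pow, Finset.mul_sum]
      apply sum_congr rfl
      intro m _
      rw [show ((-1 : ℝ[X]) ^ (n - m)) = C ((-1 : ℝ) ^ (n - m)) by
            rw [map_pow, map_neg, map_one],
        show ((n.choose m : ℝ[X])) = C ((n.choose m : ℝ)) by rw [map_natCast]]
      rw [map_mul, map_mul]
      ring
    rw [hexp, Phi_finsum, Finset.mul_sum]
    apply sum_congr rfl
    intro m _
    rw [Phi_monomial]
    rw [fR]
    ring
  have hPhiG : Phi q r G = ∑ k ∈ range (n + 1),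
      ((-1 : ℝ) ^ k * qfact q k *
        ∑ i ∈ range r,
          q ^ (i * k) * qff q ((r : ℝ) - 1) i / qff q ((k : ℝ) + r) (i + 1)) * S k := by
    rw [hG, Phi_finsum]
    apply sum_congr rfl
    intro k _
    rw [Phi_Cmul, Phi_Pq hq hq1 k r hr]
    have hT : q ^ (k * (k - 1) / 2) ≠ 0 := pow_ne_zero _ hq.ne'
    rw [Ak]
    field_simp
  rw [← hPhiF, ← hPhiG, hFG]
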